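/- Let (X,d) be a metric space. Every TB-regular function from (X,d) to any other metric space (Y,ρ) is Cauchy continuous if and only if (X,d) is complete and discrete (every point of X is isolated). -/

import Mathlib

universe u v

/-- `f` is TB-regular if it maps totally bounded sets to totally bounded sets. -/
def TBRegular {X : Type u} {Y : Type v} [MetricSpace X] [MetricSpace Y] (f : X → Y) : Prop :=
  ∀ A : Set X, TotallyBounded A → TotallyBounded (f '' A)

/-- `f` is Cauchy continuous if it maps Cauchy sequences to Cauchy sequences. -/
def CauchyCont {X : Type u} {Y : Type v} [MetricSpace X] [MetricSpace Y] (f : X → Y) : Prop :=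
  ∀ u : ℕ → X, CauchySeq u → CauchySeq (f ∘ u)

/-- A function with range contained in a finite set is TB-regular. -/
lemma tbRegular_of_finite_range {X : Type u} {Y : Type v} [MetricSpace X] [MetricSpace Y]
    (f : X → Y) (s : Set Y) (hs : s.Finite) (hr : Set.range f ⊆ s) : TBRegular f := by
  intro A _
  exact (hs.totallyBounded).subset (le_trans (Set.image_subset_range f A) hr)

/-- A sequence taking value `a` on evens and `b ≠ a` on odds is not Cauchy. -/
lemma not_cauchySeq_alt {Y : Type v} [MetricSpace Y] (w : ℕ → Y) (a b : Y) (hab : a ≠ b)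
    (h1 : ∀ n, w (2 * n) = a) (h2 : ∀ n, w (2 * n + 1) = b) : ¬ CauchySeq w := by
  intro hc
  rw [Metric.cauchySeq_iff] at hc
  obtain ⟨N, hN⟩ := hc (dist a b) (dist_pos.2 hab)
  have h := hN (2 * N) (by omega) (2 * N + 1) (by omega)
  rw [h1 N, h2 N] at h
  exact lt_irrefl _ h

lemma exists_injective_cauchySeq_of_not_tendsto {X : Type u} [MetricSpace X] {u : ℕ → X}
    (hu : CauchySeq u) (hdiv : ∀ a : X, ¬ Filter.Tendsto u Filter.atTop (nhds a)) :
    ∃ v : ℕ → X, CauchySeq v ∧ Function.Injective v := by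
  -- the range of u is infinite
  have hinf : (Set.range u).Infinite := by
    intro hfin
    -- some value is attained infinitely often
    have : ∃ a : X, {n : ℕ | u n = a}.Infinite := by
      by_contra h
      push_neg at h
      have : (Set.univ : Set ℕ).Finite := by
        have : (Set.univ : Set ℕ) ⊆ ⋃ a ∈ Set.range u, {n : ℕ | u n = a} := by
          intro n _
          exact Set.mem_biUnion (Set.mem_range_self n) rfl
        refine Set.Finite.subset ?_ this
        exact hfin.biUnion fun a _ => h a
      exact Set.infinite_univ this
    obtain ⟨a, ha⟩ := this
    -- subsequence constant equal to a, so u converges to a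
    have hmem : ∀ n, u (Nat.nth (fun n => u n = a) n) = a :=
      fun n => Nat.nth_mem_of_infinite ha n
    have hmono : StrictMono (Nat.nth (fun n => u n = a)) := Nat.nth_strictMono ha
    have : Filter.Tendsto u Filter.atTop (nhds a) := by
      refine tendsto_nhds_of_cauchySeq_of_subseq hu hmono.tendsto_atTop ?_
      have : (u ∘ Nat.nth (fun n => u n = a)) = fun _ => a := funext hmem
      rw [this]
      exact tendsto_const_nhds
    exact hdiv a this
  -- build strictly increasing indices with new values
  have hstep : ∀ n : ℕ, ∃ m : ℕ, n < m ∧ u m ∉ u '' Set.Iic n := by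
    intro n
    have hfin : (u '' Set.Iic n).Finite := (Set.finite_Iic n).image u
    obtain ⟨y, hy⟩ := (hinf.diff hfin).nonempty
    obtain ⟨m, rfl⟩ := hy.1
    refine ⟨m, ?_, hy.2⟩
    by_contra h
    exact hy.2 ⟨m, Set.mem_Iic.2 (by omega), rfl⟩
  choose F hF1 hF2 using hstep
  set g : ℕ → ℕ := fun k => F^[k] 0 with hg
  have hgsucc : ∀ k, g (k + 1) = F (g k) := fun k => Function.iterate_succ_apply' F k 0
  have hgmono : StrictMono g := strictMono_nat_of_lt_succ fun k => by
    rw [hgsucc]; exact hF1 (g k)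
  refine ⟨u ∘ g, hu.comp_tendsto hgmono.tendsto_atTop, ?_⟩
  have key : ∀ i j : ℕ, i < j → u (g i) ≠ u (g j) := by
    intro i j hij heq
    obtain ⟨j', rfl⟩ : ∃ j', j = j' + 1 := ⟨j - 1, by omega⟩
    have h2 := hF2 (g j')
    rw [← hgsucc] at h2
    exact h2 ⟨g i, hgmono.monotone (by omega), heq⟩
  intro i j hij
  by_contra hne
  rcases lt_trichotomy i j with h | h | h
  · exact key i j h hij
  · exact hne h
  · exact key j i h hij.symm

theorem tbRegular_cauchyCont_iff_complete_discrete {X : Type u} [MetricSpace X] :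
    (∀ (Y : Type v) [MetricSpace Y] (f : X → Y), TBRegular f → CauchyCont f) ↔
      (CompleteSpace X ∧ ∀ x : X, ∃ ε > 0, ∀ y : X, dist x y < ε → y = x) := by
  classical
  constructor
  · intro H
    constructor
    · -- completeness
      by_contra hc
      have : ¬ ∀ u : ℕ → X, CauchySeq u → ∃ a, Filter.Tendsto u Filter.atTop (nhds a) :=
        fun h => hc (Metric.complete_of_cauchySeq_tendsto h)
      push_neg at this
      obtain ⟨u, hu, hdiv⟩ := this
      obtain ⟨v, hv, hvinj⟩ := exists_injective_cauchySeq_of_not_tendsto hu hdiv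
      set S : Set X := v '' {n : ℕ | Even n} with hS
      set f : X → ULift.{v} ℝ := fun z => if z ∈ S then ULift.up 1 else ULift.up 0 with hf
      have htb : TBRegular f := by
        refine tbRegular_of_finite_range f {ULift.up 1, ULift.up 0}
          ((Set.finite_singleton _).insert _) ?_
        rintro y ⟨z, rfl⟩
        by_cases h : z ∈ S <;> simp [hf, h]
      have hcc := H (ULift.{v} ℝ) f htb v hv
      refine not_cauchySeq_alt (f ∘ v) (ULift.up 1) (ULift.up 0) ?_ ?_ ?_ hcc
      · intro h
        have := congrArg ULift.down h
        norm_num at this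
      · intro n
        have : v (2 * n) ∈ S := ⟨2 * n, ⟨n, by ring⟩, rfl⟩
        simp [hf, this]
      · intro n
        have : v (2 * n + 1) ∉ S := by
          rintro ⟨m, hm, heq⟩
          have := hvinj heq
          obtain ⟨k, hk⟩ := hm
          omega
        simp [hf, this]
    · -- discreteness
      intro x
      by_contra h
      push_neg at h
      have hy : ∀ n : ℕ, ∃ y : X, dist x y < 1 / (n + 1) ∧ y ≠ x := by
        intro n
        obtain ⟨y, hy1, hy2⟩ := h (1 / (n + 1)) (by positivity)
        exact ⟨y, hy1, hy2⟩
      choose y hy1 hy2 using hy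
      set w : ℕ → X := fun n => if Even n then x else y n with hw
      have hwt : Filter.Tendsto w Filter.atTop (nhds x) := by
        rw [tendsto_iff_dist_tendsto_zero]
        have hb : ∀ n : ℕ, dist (w n) x ≤ 1 / (n + 1) := by
          intro n
          by_cases hn : Even n
          · simp [hw, hn]; positivity
          · simp only [hw, hn, if_false]
            rw [dist_comm]
            exact (hy1 n).le
        refine squeeze_zero (fun n => dist_nonneg) hb ?_
        exact tendsto_one_div_add_atTop_nhds_zero_nat
      have hwc : CauchySeq w := hwt.cauchySeq
      set f : X → ULift.{v} ℝ := fun z => if z = x then ULift.up 1 else ULift.up 0 with hf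
      have htb : TBRegular f := by
        refine tbRegular_of_finite_range f {ULift.up 1, ULift.up 0}
          ((Set.finite_singleton _).insert _) ?_
        rintro z ⟨a, rfl⟩
        by_cases h : a = x <;> simp [hf, h]
      have hcc := H (ULift.{v} ℝ) f htb w hwc
      refine not_cauchySeq_alt (f ∘ w) (ULift.up 1) (ULift.up 0) ?_ ?_ ?_ hcc
      · intro h
        have := congrArg ULift.down h
        norm_num at this
      · intro n
        simp [hf, hw, Function.comp]
      · intro n
        have hodd : ¬ Even (2 * n + 1) := by simp [Nat.even_add_one, parity_simps]
        have : w (2 * n + 1) = y (2 * n + 1) := by simp [hw, hodd]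
        simp [Function.comp, this, hf, hy2 (2 * n + 1)]
  · rintro ⟨hcomp, hdisc⟩ Y _ f _ u hu
    obtain ⟨a, ha⟩ := cauchySeq_tendsto_of_complete hu
    obtain ⟨ε, hε, hiso⟩ := hdisc a
    obtain ⟨N, hN⟩ := Metric.tendsto_atTop.1 ha ε hε
    have hev : ∀ᶠ n in Filter.atTop, u n = a :=
      Filter.eventually_atTop.2 ⟨N, fun n hn => hiso (u n) (by rw [dist_comm]; exact hN n hn)⟩
    have : Filter.Tendsto (f ∘ u) Filter.atTop (nhds (f a)) := by
      refine Filter.Tendsto.congr' ?_ tendsto_const_nhds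
      filter_upwards [hev] with n hn
      simp [Function.comp, hn]
    exact this.cauchySeq
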